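/- Let a ∈ ℂ[X] be a polynomial of degree at most 4 with λ⁴·conj(a(1/conj(λ))) = a(λ) for all λ ≠ 0 and with λ^{−2}·a(λ) a positive real number for all λ with |λ| = 1. Then a(−1) is a positive real number, and there exists a unique monic polynomial â ∈ ℝ[X] of degree 4 such that â(κ) = ((i + κ)⁴ / a(−1)) · a((i − κ)/(i + κ)) for all κ ∈ ℂ with κ ≠ −i; moreover â(x) > 0 for every real x. -/

import Mathlib

open Polynomial

/-- Cayley transform of spectral curve polynomials: if `a ∈ ℂ[X]` has degree at
most 4, satisfies the reality condition, and `λ⁻²·a(λ)` is positive real on the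
unit circle, then `a(−1)` is a positive real number and there is a unique monic
real quartic `â` with `â(κ) = ((i+κ)⁴/a(−1))·a((i−κ)/(i+κ))` for `κ ≠ −i`;
moreover `â > 0` on ℝ. -/
theorem stmt_16 (a : ℂ[X]) (hdeg : a.degree ≤ 4)
    (hreal : ∀ l : ℂ, l ≠ 0 →
      l ^ 4 * (starRingEnd ℂ) (a.eval ((starRingEnd ℂ) l)⁻¹) = a.eval l)
    (hpos : ∀ l : ℂ, ‖l‖ = 1 →
      ∃ r : ℝ, 0 < r ∧ a.eval l = (r : ℂ) * l ^ 2) :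
    (∃ r : ℝ, 0 < r ∧ a.eval (-1) = (r : ℂ)) ∧
    (∃! ahat : ℝ[X], ahat.Monic ∧ ahat.degree = 4 ∧
      ∀ κ : ℂ, κ ≠ -Complex.I →
        Polynomial.aeval κ ahat =
          ((Complex.I + κ) ^ 4 / a.eval (-1)) *
            a.eval ((Complex.I - κ) / (Complex.I + κ))) ∧
    (∀ ahat : ℝ[X], ahat.Monic → ahat.degree = 4 →
      (∀ κ : ℂ, κ ≠ -Complex.I →
        Polynomial.aeval κ ahat =
          ((Complex.I + κ) ^ 4 / a.eval (-1)) *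
            a.eval ((Complex.I - κ) / (Complex.I + κ))) →
      ∀ x : ℝ, 0 < ahat.eval x) := by
  -- basic nonvanishing facts
  have hI : ∀ x : ℝ, (Complex.I + (x : ℂ)) ≠ 0 := by
    intro x h
    have := congrArg Complex.im h
    simp at this
  have hI' : ∀ x : ℝ, (Complex.I - (x : ℂ)) ≠ 0 := by
    intro x h
    have := congrArg Complex.im h
    simp at this
  have hxni : ∀ x : ℝ, ((x : ℂ)) ≠ -Complex.I := by
    intro x h
    have := congrArg Complex.im h
    simp at this
  -- part 1
  obtain ⟨r₀, hr₀, hA0⟩ := hpos (-1) (by simp)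
  have hA : a.eval (-1) = (r₀ : ℂ) := by rw [hA0]; ring
  have hAne : a.eval (-1) ≠ 0 := by
    rw [hA]; exact_mod_cast hr₀.ne'
  -- |(i-x)/(i+x)| = 1 for real x
  have habs : ∀ x : ℝ,
      ‖(Complex.I - (x : ℂ)) / (Complex.I + x)‖ = 1 := by
    intro x
    have hc : Complex.I - (x : ℂ) = -(starRingEnd ℂ) (Complex.I + x) := by
      apply Complex.ext <;> simp
    rw [norm_div, hc, norm_neg, Complex.norm_conj, div_self]
    exact norm_ne_zero_iff.mpr (hI x)
  have hprod : ∀ x : ℝ,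
      (Complex.I + (x : ℂ)) * (Complex.I - x) = -(1 + (x : ℂ) ^ 2) := by
    intro x
    linear_combination Complex.I_sq
  -- key positivity on the real line (before dividing by a(-1))
  have key : ∀ x : ℝ, ∃ s : ℝ, 0 < s ∧
      (Complex.I + (x : ℂ)) ^ 4 *
        a.eval ((Complex.I - x) / (Complex.I + x)) = (s : ℂ) := by
    intro x
    obtain ⟨s, hs, he⟩ := hpos _ (habs x)
    refine ⟨s * (1 + x ^ 2) ^ 2, by positivity, ?_⟩
    rw [he, mul_left_comm]
    have hc : (Complex.I + (x : ℂ)) ^ 4 *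
        ((Complex.I - x) / (Complex.I + x)) ^ 2 =
        ((Complex.I + (x : ℂ)) * (Complex.I - x)) ^ 2 := by
      rw [div_pow]
      field_simp [hI x]
    rw [hc, hprod]
    push_cast
    ring
  -- the complex candidate polynomial
  have hnatdeg : a.natDegree < 5 :=
    lt_of_le_of_lt (natDegree_le_iff_degree_le.mpr hdeg) (by norm_num)
  set P : ℂ[X] := ∑ k ∈ Finset.range 5,
      C (a.coeff k) * ((C Complex.I - X) ^ k * (C Complex.I + X) ^ (4 - k))
    with hPdef
  have L1 : ∀ κ : ℂ, Complex.I + κ ≠ 0 →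
      P.eval κ = (Complex.I + κ) ^ 4 *
        a.eval ((Complex.I - κ) / (Complex.I + κ)) := by
    intro κ hκ
    rw [hPdef, eval_finset_sum, eval_eq_sum_range' hnatdeg, Finset.mul_sum]
    refine Finset.sum_congr rfl ?_
    intro k hk
    have hk4 : k ≤ 4 := by
      have := Finset.mem_range.mp hk; omega
    simp only [eval_mul, eval_pow, eval_add, eval_sub, eval_C, eval_X]
    have h4 : (Complex.I + κ) ^ 4 =
        (Complex.I + κ) ^ k * (Complex.I + κ) ^ (4 - k) := by
      rw [← pow_add]; congr 1; omega
    rw [div_pow, h4]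
    field_simp
  -- leading coefficient data for the building blocks
  have hT : ∀ k : ℕ, k ≤ 4 →
      ((C Complex.I - X) ^ k * (C Complex.I + X) ^ (4 - k) : ℂ[X]).natDegree = 4 ∧
      ((C Complex.I - X) ^ k * (C Complex.I + X) ^ (4 - k) : ℂ[X]).coeff 4 = (-1) ^ k := by
    intro k hk
    have h1 : (C Complex.I - X : ℂ[X]) = -(X - C Complex.I) := by ring
    have hdeg1 : (C Complex.I - X : ℂ[X]).natDegree = 1 := by
      rw [h1, natDegree_neg, natDegree_X_sub_C]
    have hlc1 : (C Complex.I - X : ℂ[X]).leadingCoeff = -1 := by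
      rw [h1, leadingCoeff_neg, (monic_X_sub_C _).leadingCoeff]
    have hm2 : (C Complex.I + X : ℂ[X]).Monic := by
      rw [add_comm]; exact monic_X_add_C _
    have hdeg2 : (C Complex.I + X : ℂ[X]).natDegree = 1 := by
      rw [add_comm]; exact natDegree_X_add_C _
    have hne1 : ((C Complex.I - X : ℂ[X]) ^ k) ≠ 0 := by
      apply pow_ne_zero
      intro h; rw [h] at hdeg1; simp at hdeg1
    have hne2 : ((C Complex.I + X : ℂ[X]) ^ (4 - k)) ≠ 0 :=
      pow_ne_zero _ hm2.ne_zero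
    have hnd : ((C Complex.I - X) ^ k * (C Complex.I + X) ^ (4 - k) : ℂ[X]).natDegree = 4 := by
      rw [natDegree_mul hne1 hne2, natDegree_pow, natDegree_pow, hdeg1, hdeg2]
      omega
    refine ⟨hnd, ?_⟩
    have : ((C Complex.I - X) ^ k * (C Complex.I + X) ^ (4 - k) : ℂ[X]).coeff 4 =
        ((C Complex.I - X) ^ k * (C Complex.I + X) ^ (4 - k) : ℂ[X]).leadingCoeff := by
      rw [leadingCoeff, hnd]
    rw [this, leadingCoeff_mul, leadingCoeff_pow, leadingCoeff_pow, hlc1,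
      hm2.leadingCoeff, one_pow, mul_one]
  -- leading coefficient of P
  have hPc4 : P.coeff 4 = a.eval (-1) := by
    rw [hPdef, finset_sum_coeff, eval_eq_sum_range' hnatdeg]
    refine Finset.sum_congr rfl ?_
    intro k hk
    have hk4 : k ≤ 4 := by
      have := Finset.mem_range.mp hk; omega
    rw [coeff_C_mul, (hT k hk4).2]
  have hPnd : P.natDegree ≤ 4 := by
    rw [hPdef]
    refine natDegree_sum_le_of_forall_le _ _ ?_
    intro k hk
    have hk4 : k ≤ 4 := by
      have := Finset.mem_range.mp hk; omega
    calc (C (a.coeff k) * ((C Complex.I - X) ^ k * (C Complex.I + X) ^ (4 - k))).natDegree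
        ≤ ((C Complex.I - X) ^ k * (C Complex.I + X) ^ (4 - k) : ℂ[X]).natDegree :=
          natDegree_C_mul_le _ _
      _ = 4 := (hT k hk4).1
  -- P has real coefficients
  have hPreal : ∀ x : ℝ, (starRingEnd ℂ) (P.eval ((x : ℂ))) = P.eval ((x : ℂ)) := by
    intro x
    set l : ℂ := (Complex.I - x) / (Complex.I + x) with hl
    have hl0 : l ≠ 0 := div_ne_zero (hI' x) (hI x)
    have hconj : (starRingEnd ℂ) l = l⁻¹ := by
      rw [Complex.inv_def, Complex.normSq_eq_norm_sq, habs x]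
      simp
    have hre : l ^ 4 * (starRingEnd ℂ) (a.eval l) = a.eval l := by
      have := hreal l hl0
      rwa [hconj, inv_inv] at this
    have hl4 : l ^ 4 ≠ 0 := pow_ne_zero _ hl0
    have hc2 : (starRingEnd ℂ) (a.eval l) = a.eval l / l ^ 4 := by
      rw [eq_div_iff hl4]
      linear_combination hre
    have hc1 : (starRingEnd ℂ) (Complex.I + (x : ℂ)) = -(Complex.I - x) := by
      apply Complex.ext <;> simp
    rw [L1 _ (hI x), map_mul, map_pow, hc1, hc2, hl, div_pow]
    rw [show (-(Complex.I - (x : ℂ))) ^ 4 = (Complex.I - (x : ℂ)) ^ 4 from by ring]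
    rw [div_div_eq_mul_div, mul_comm ((Complex.I - (x : ℂ)) ^ 4),
      div_mul_cancel₀ _ (pow_ne_zero 4 (hI' x))]
    ring
  have hPP : P.map (starRingEnd ℂ) = P := by
    have hsub : Set.range (Complex.ofReal) ⊆
        {z | (P.map (starRingEnd ℂ) - P).IsRoot z} := by
      rintro _ ⟨x, rfl⟩
      have h1 : (P.map (starRingEnd ℂ)).eval ((starRingEnd ℂ) (x : ℂ)) =
          (starRingEnd ℂ) (P.eval (x : ℂ)) := by
        simp [Polynomial.eval_map, ← Polynomial.eval₂_at_apply]
      rw [Complex.conj_ofReal] at h1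
      simp only [Set.mem_setOf_eq, IsRoot, eval_sub, h1, hPreal x, sub_self]
    have hinf : ({z | (P.map (starRingEnd ℂ) - P).IsRoot z}).Infinite :=
      (Set.infinite_range_of_injective Complex.ofReal_injective).mono hsub
    have := Polynomial.eq_zero_of_infinite_isRoot _ hinf
    linear_combination this
  have hcr : ∀ k : ℕ, P.coeff k = (((P.coeff k).re : ℝ) : ℂ) := by
    intro k
    have h := congrArg (fun p : ℂ[X] => p.coeff k) hPP
    simp only [coeff_map] at h
    exact (Complex.conj_eq_iff_re.mp h).symm
  -- the real candidate polynomial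
  set Q : ℝ[X] := ∑ k ∈ Finset.range 5, C ((P.coeff k).re / r₀) * X ^ k with hQdef
  have hQcoeff : ∀ n : ℕ, Q.coeff n =
      if n < 5 then (P.coeff n).re / r₀ else 0 := by
    intro n
    rw [hQdef, finset_sum_coeff]
    simp only [coeff_C_mul, coeff_X_pow, mul_ite, mul_one, mul_zero]
    rw [Finset.sum_ite_eq (Finset.range 5) n fun k => (P.coeff k).re / r₀]
    simp [Finset.mem_range]
  have hQmap : Q.map (algebraMap ℝ ℂ) = C ((r₀ : ℂ))⁻¹ * P := by
    apply Polynomial.ext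
    intro n
    rw [coeff_map, coeff_C_mul, hQcoeff n]
    by_cases hn : n < 5
    · rw [if_pos hn]
      rw [div_eq_mul_inv, map_mul, map_inv₀]
      rw [show (algebraMap ℝ ℂ) ((P.coeff n).re) = P.coeff n from by
        rw [Complex.coe_algebraMap]; exact (hcr n).symm]
      rw [show (algebraMap ℝ ℂ) r₀ = ((r₀ : ℝ) : ℂ) from by rw [Complex.coe_algebraMap]]
      ring
    · rw [if_neg hn]
      have hz : P.coeff n = 0 :=
        coeff_eq_zero_of_natDegree_lt (lt_of_le_of_lt hPnd (by omega))
      simp [hz]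
  have hQ4 : Q.coeff 4 = 1 := by
    rw [hQcoeff 4, if_pos (by norm_num), hPc4, hA]
    simp [div_self hr₀.ne']
  have hQdeg : Q.degree = 4 := by
    refine le_antisymm ?_ (le_degree_of_ne_zero (by rw [hQ4]; exact one_ne_zero))
    rw [hQdef]
    refine (degree_sum_le _ _).trans ?_
    refine Finset.sup_le ?_
    intro k hk
    refine (degree_C_mul_X_pow_le k _).trans ?_
    have hk4 : k ≤ 4 := by
      have := Finset.mem_range.mp hk; omega
    exact_mod_cast hk4
  have hQnd : Q.natDegree = 4 := natDegree_eq_of_degree_eq_some hQdeg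
  have hQmonic : Q.Monic := by
    rw [Monic, leadingCoeff, hQnd, hQ4]
  have hQeval : ∀ κ : ℂ, κ ≠ -Complex.I →
      Polynomial.aeval κ Q =
        ((Complex.I + κ) ^ 4 / a.eval (-1)) *
          a.eval ((Complex.I - κ) / (Complex.I + κ)) := by
    intro κ hκ
    have hne : Complex.I + κ ≠ 0 := by
      intro h; exact hκ (by linear_combination h)
    have h1 : Polynomial.aeval κ Q = (Q.map (algebraMap ℝ ℂ)).eval κ := by
      rw [aeval_def, eval₂_eq_eval_map]
    rw [h1, hQmap, eval_mul, eval_C, L1 κ hne, hA]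
    rw [div_eq_mul_inv]
    ring
  -- uniqueness of real polynomials agreeing on the real axis
  have huniq : ∀ p q : ℝ[X],
      (∀ x : ℝ, Polynomial.aeval ((x : ℂ)) p = Polynomial.aeval ((x : ℂ)) q) →
      p = q := by
    intro p q h
    have hsub : Set.range (Complex.ofReal) ⊆
        {z | (p.map (algebraMap ℝ ℂ) - q.map (algebraMap ℝ ℂ)).IsRoot z} := by
      rintro _ ⟨x, rfl⟩
      have := h x
      rw [aeval_def, eval₂_eq_eval_map, aeval_def, eval₂_eq_eval_map] at this
      simp only [Set.mem_setOf_eq, IsRoot, eval_sub, this, sub_self]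
    have hinf : ({z | (p.map (algebraMap ℝ ℂ) - q.map (algebraMap ℝ ℂ)).IsRoot z}).Infinite :=
      (Set.infinite_range_of_injective Complex.ofReal_injective).mono hsub
    have h0 := Polynomial.eq_zero_of_infinite_isRoot _ hinf
    have hmm : p.map (algebraMap ℝ ℂ) = q.map (algebraMap ℝ ℂ) := by
      linear_combination h0
    exact Polynomial.map_injective _ (by exact_mod_cast Complex.ofReal_injective) hmm
  -- the positivity statement (part 3)
  have part3 : ∀ ahat : ℝ[X], ahat.Monic → ahat.degree = 4 →
      (∀ κ : ℂ, κ ≠ -Complex.I →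
        Polynomial.aeval κ ahat =
          ((Complex.I + κ) ^ 4 / a.eval (-1)) *
            a.eval ((Complex.I - κ) / (Complex.I + κ))) →
      ∀ x : ℝ, 0 < ahat.eval x := by
    intro ahat _ _ hid x
    obtain ⟨s, hs, hkey⟩ := key x
    have h1 := hid (x : ℂ) (hxni x)
    have h2 : Polynomial.aeval ((x : ℂ)) ahat = ((ahat.eval x : ℝ) : ℂ) := by
      rw [show ((x : ℂ)) = algebraMap ℝ ℂ x from rfl,
        Polynomial.aeval_algebraMap_apply]
      simp [aeval_def, eval₂_eq_eval_map]
    rw [h2, hA] at h1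
    have h3 : ((ahat.eval x : ℝ) : ℂ) = ((s / r₀ : ℝ) : ℂ) := by
      rw [h1]
      rw [div_mul_eq_mul_div, hkey]
      push_cast
      ring
    have h4 : ahat.eval x = s / r₀ := Complex.ofReal_inj.mp h3
    rw [h4]
    positivity
  refine ⟨⟨r₀, hr₀, hA⟩, ?_, part3⟩
  refine ⟨Q, ⟨hQmonic, hQdeg, hQeval⟩, ?_⟩
  rintro p ⟨_, _, hpe⟩
  refine huniq p Q ?_
  intro x
  rw [hpe (x : ℂ) (hxni x), hQeval (x : ℂ) (hxni x)]
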